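/- The Pidduck polynomials P_n(x), defined by \sum_{n\ge 0} P_n(x) z^n/n! = \frac{1}{1-z}\left(\frac{1+z}{1-z}\right)^x, satisfy P_n(x) = n! \sum_{k=0}^n \binom{n}{n-k} 2^k \binom{x}{k}. -/

import Mathlib

open PowerSeries

/-- Composition `f ∘ g` of formal power series (intended for `g` with zero
constant coefficient). -/
noncomputable def psComp (f g : PowerSeries ℂ) : PowerSeries ℂ :=
  PowerSeries.mk fun n => ∑ k ∈ Finset.range (n + 1),
    (PowerSeries.coeff k f) * (PowerSeries.coeff n (g ^ k))

/-- `e^u` for a power series `u` with zero constant coefficient. -/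
noncomputable def psExp (u : PowerSeries ℂ) : PowerSeries ℂ :=
  psComp (PowerSeries.exp ℂ) u

/-- The power series `log(1 + z) = ∑_{n≥1} (-1)^{n+1} zⁿ/n`. -/
noncomputable def logOneAdd : PowerSeries ℂ :=
  PowerSeries.mk fun n => if n = 0 then 0 else (-1) ^ (n + 1) / (n : ℂ)

/-- The power series `log(1 - z) = -∑_{n≥1} zⁿ/n`. -/
noncomputable def logOneSub : PowerSeries ℂ :=
  PowerSeries.mk fun n => if n = 0 then 0 else -(1 / (n : ℂ))

/-- The generalized binomial coefficient `m(m-1)⋯(m-j+1)/j!`. -/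
noncomputable def genBinom (m : ℂ) (j : ℕ) : ℂ :=
  (∏ i ∈ Finset.range j, (m - i)) / (j.factorial : ℂ)

open Finset

section Aux

lemma F1C (n j : ℕ) : (n.choose (j+1) : ℂ) * (j+1) = ((n:ℂ) - j) * n.choose j := by
  rcases le_or_gt j n with h | h
  · have hc : ((n.choose (j+1) * (j+1) : ℕ) : ℂ) = ((n.choose j * (n - j) : ℕ) : ℂ) := by
      rw [Nat.choose_succ_right_eq]
    push_cast [Nat.cast_sub h] at hc
    linear_combination hc
  · rw [Nat.choose_eq_zero_of_lt h, Nat.choose_eq_zero_of_lt (h.trans (Nat.lt_succ_self _))]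
    ring

lemma F2C (n j : ℕ) : (n:ℂ) * ((n-1).choose (j+1)) = ((n:ℂ) - (j+1)) * n.choose (j+1) := by
  cases n with
  | zero => simp
  | succ m =>
    have h1 := F1C (m+1) (j+1)
    have h2 : (((m+1) * m.choose (j+1) : ℕ) : ℂ) = (((m+1).choose (j+2) * (j+2) : ℕ) : ℂ) := by
      rw [Nat.add_one_mul_choose_eq]
    push_cast at h1 h2 ⊢
    linear_combination h2 + h1

lemma choose_key (n k : ℕ) : ((n:ℂ)+1) * ((n+1).choose k : ℂ)
    = (k:ℂ) * (n.choose (k-1) : ℂ) + (2*(k:ℂ)+1) * (n.choose k : ℂ)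
      + (n:ℂ) * ((n-1).choose k : ℂ) := by
  cases k with
  | zero =>
    simp [Nat.choose_zero_right]
    ring
  | succ j =>
    have hp : (((n+1).choose (j+1) : ℕ) : ℂ) = (n.choose j : ℂ) + (n.choose (j+1) : ℂ) := by
      rw [Nat.choose_succ_succ]; push_cast; ring
    have h1 := F1C n j
    have h2 := F2C n j
    rw [hp]
    simp only [Nat.add_sub_cancel]
    push_cast
    linear_combination -h1 - h2

lemma genBinom_succ (x : ℂ) (k : ℕ) :
    ((k:ℂ)+1) * genBinom x (k+1) = (x - k) * genBinom x k := by
  unfold genBinom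
  rw [Finset.prod_range_succ, Nat.factorial_succ]
  have h1 : (k.factorial : ℂ) ≠ 0 := Nat.cast_ne_zero.2 k.factorial_ne_zero
  have h2 : ((k:ℂ)+1) ≠ 0 := by
    have := Nat.cast_add_one_ne_zero (R := ℂ) k
    exact_mod_cast this
  push_cast
  field_simp

/-- The target sum. -/
noncomputable def Ssum (x : ℂ) (n : ℕ) : ℂ :=
  ∑ k ∈ Finset.range (n+1), (n.choose k : ℂ) * 2^k * genBinom x k

lemma Ssum_rec (x : ℂ) (n : ℕ) :
    ((n:ℂ)+1) * Ssum x (n+1) = (2*x+1) * Ssum x n + (n:ℂ) * Ssum x (n-1) := by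
  have hL : ((n:ℂ)+1) * Ssum x (n+1)
      = ∑ k ∈ range (n+2), ((n:ℂ)+1) * ((n+1).choose k : ℂ) * (2^k * genBinom x k) := by
    rw [Ssum, Finset.mul_sum]
    exact sum_congr rfl fun k _ => by ring
  have hkey : ∀ k ∈ range (n+2),
      ((n:ℂ)+1) * ((n+1).choose k : ℂ) * (2^k * genBinom x k)
      = (k:ℂ) * (n.choose (k-1) : ℂ) * (2^k * genBinom x k)
        + (2*(k:ℂ)+1) * (n.choose k : ℂ) * (2^k * genBinom x k)
        + (n:ℂ) * ((n-1).choose k : ℂ) * (2^k * genBinom x k) := fun k _ => by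
    linear_combination ((2:ℂ)^k * genBinom x k) * choose_key n k
  rw [hL, Finset.sum_congr rfl hkey, Finset.sum_add_distrib, Finset.sum_add_distrib]
  have hre : (∑ k ∈ range (n+2), (k:ℂ) * (n.choose (k-1) : ℂ) * (2^k * genBinom x k))
      = ∑ k ∈ range (n+1), (n.choose k : ℂ) * 2^(k+1) * (((k:ℂ)+1) * genBinom x (k+1)) := by
    rw [Finset.sum_range_succ' _ (n+1)]
    simp only [Nat.cast_zero, zero_mul, add_zero, Nat.add_sub_cancel]
    exact sum_congr rfl fun i _ => by push_cast; ring
  have h2 : (∑ k ∈ range (n+2), (2*(k:ℂ)+1) * (n.choose k : ℂ) * (2^k * genBinom x k))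
      = ∑ k ∈ range (n+1), (2*(k:ℂ)+1) * (n.choose k : ℂ) * (2^k * genBinom x k) := by
    rw [Finset.sum_range_succ, Nat.choose_succ_self]
    simp
  have h3 : (∑ k ∈ range (n+2), (n:ℂ) * ((n-1).choose k : ℂ) * (2^k * genBinom x k))
      = (n:ℂ) * Ssum x (n-1) := by
    cases n with
    | zero => simp
    | succ m =>
      simp only [Nat.add_sub_cancel]
      rw [Ssum]
      have hcut : (∑ k ∈ range (m+1+2), ((m+1:ℕ):ℂ) * (m.choose k : ℂ) * (2^k * genBinom x k))
          = ∑ k ∈ range (m+1), ((m+1:ℕ):ℂ) * (m.choose k : ℂ) * (2^k * genBinom x k) := by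
        symm
        apply Finset.sum_subset (Finset.range_subset_range.2 (by omega))
        intro k hk hk'
        have hmk : m < k := by simp only [Finset.mem_range] at hk hk'; omega
        rw [Nat.choose_eq_zero_of_lt hmk]
        push_cast; ring
      rw [hcut, Finset.mul_sum]
      exact sum_congr rfl fun k _ => by ring
  rw [hre, h2, h3]
  have hre2 : ∀ k ∈ range (n+1),
      (n.choose k : ℂ) * 2^(k+1) * (((k:ℂ)+1) * genBinom x (k+1))
      = (n.choose k : ℂ) * 2^(k+1) * ((x - k) * genBinom x k) := fun k _ => by
    rw [genBinom_succ]
  rw [Finset.sum_congr rfl hre2]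
  rw [Ssum, Finset.mul_sum, ← Finset.sum_add_distrib]
  have : ∀ k ∈ range (n+1),
      (n.choose k : ℂ) * 2^(k+1) * ((x - k) * genBinom x k)
        + (2*(k:ℂ)+1) * (n.choose k : ℂ) * (2^k * genBinom x k)
      = (2*x+1) * ((n.choose k : ℂ) * 2^k * genBinom x k) := fun k _ => by ring
  rw [Finset.sum_congr rfl this, Ssum, Finset.mul_sum]

lemma coeff_psExp (u : ℂ⟦X⟧) (n : ℕ) :
    coeff n (psExp u) = ∑ k ∈ Finset.range (n+1), (k.factorial : ℂ)⁻¹ * coeff n (u ^ k) := by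
  simp only [psExp, psComp, coeff_mk]
  refine Finset.sum_congr rfl fun k _ => ?_
  rw [coeff_exp]
  norm_num [map_div₀, map_natCast]

lemma coeff_pow_eq_zero {u : ℂ⟦X⟧} (hu : constantCoeff u = 0) {m k : ℕ} (h : m < k) :
    coeff m (u ^ k) = 0 := by
  obtain ⟨g, hg⟩ := PowerSeries.X_dvd_iff.2 hu
  rw [hg, mul_pow, coeff_X_pow_mul', if_neg (by omega)]

lemma coeff_zero_psExp (u : ℂ⟦X⟧) : coeff 0 (psExp u) = 1 := by
  rw [coeff_psExp]
  simp

lemma deriv_psExp (u : ℂ⟦X⟧) (hu : constantCoeff u = 0) :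
    d⁄dX ℂ (psExp u) = d⁄dX ℂ u * psExp u := by
  ext n
  have hterm : ∀ k : ℕ, (coeff (n+1) (u^k)) * ((n:ℂ)+1)
      = (k:ℂ) * coeff n (u^(k-1) * d⁄dX ℂ u) := by
    intro k
    have h1 : coeff n (d⁄dX ℂ (u^k)) = coeff (n+1) (u^k) * ((n:ℂ)+1) :=
      coeff_derivative (u^k) n
    rw [← h1, (d⁄dX ℂ).leibniz_pow u k, map_nsmul, nsmul_eq_mul, smul_eq_mul]
  have hRHS : coeff n (d⁄dX ℂ u * psExp u)
      = ∑ j ∈ range (n+1), (j.factorial : ℂ)⁻¹ * coeff n (u^j * d⁄dX ℂ u) := by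
    rw [coeff_mul]
    have h1 : ∀ p ∈ Finset.HasAntidiagonal.antidiagonal n,
        coeff p.1 (d⁄dX ℂ u) * coeff p.2 (psExp u)
        = ∑ j ∈ range (n+1),
            (j.factorial : ℂ)⁻¹ * (coeff p.2 (u^j) * coeff p.1 (d⁄dX ℂ u)) := by
      intro p hp
      have hp2 : p.2 ≤ n := by
        have := Finset.HasAntidiagonal.mem_antidiagonal.1 hp; omega
      have hext : ∑ k ∈ range (p.2+1), (k.factorial : ℂ)⁻¹ * coeff p.2 (u^k)
          = ∑ k ∈ range (n+1), (k.factorial : ℂ)⁻¹ * coeff p.2 (u^k) := by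
        refine Finset.sum_subset (Finset.range_subset_range.2 (by omega)) fun k hk hk' => ?_
        rw [coeff_pow_eq_zero hu (by simp only [Finset.mem_range] at hk hk'; omega), mul_zero]
      rw [coeff_psExp, hext, Finset.mul_sum]
      exact Finset.sum_congr rfl fun k _ => by ring
    rw [Finset.sum_congr rfl h1, Finset.sum_comm]
    refine Finset.sum_congr rfl fun j _ => ?_
    rw [mul_comm (u^j), coeff_mul, Finset.mul_sum]
    exact Finset.sum_congr rfl fun p _ => by ring
  rw [coeff_derivative, coeff_psExp, Finset.sum_mul, hRHS]
  have h2 : ∀ k ∈ range (n+2),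
      (k.factorial : ℂ)⁻¹ * coeff (n+1) (u^k) * ((n:ℂ)+1)
      = (k.factorial : ℂ)⁻¹ * ((k:ℂ) * coeff n (u^(k-1) * d⁄dX ℂ u)) := fun k _ => by
    rw [mul_assoc, hterm k]
  rw [Finset.sum_congr rfl h2, Finset.sum_range_succ' _ (n+1)]
  simp only [Nat.cast_zero, zero_mul, mul_zero, add_zero, Nat.add_sub_cancel]
  refine Finset.sum_congr rfl fun i _ => ?_
  have h1 : (i.factorial : ℂ) ≠ 0 := Nat.cast_ne_zero.2 i.factorial_ne_zero
  have hip : ((i:ℂ)+1) ≠ 0 := Nat.cast_add_one_ne_zero (R := ℂ) i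
  rw [Nat.factorial_succ]
  push_cast
  field_simp

lemma constc_u (x : ℂ) : constantCoeff (x • (logOneAdd - logOneSub)) = 0 := by
  have : constantCoeff (x • (logOneAdd - logOneSub))
      = x * (coeff 0 logOneAdd - coeff 0 logOneSub) := by
    rw [← coeff_zero_eq_constantCoeff_apply]
    simp [PowerSeries.coeff_smul, smul_eq_mul]
  rw [this]
  simp [logOneAdd, logOneSub, coeff_mk]

lemma deriv_u (x : ℂ) : d⁄dX ℂ (x • (logOneAdd - logOneSub))
    = PowerSeries.mk (fun n => x * ((-1)^n + 1)) := by
  ext n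
  rw [coeff_derivative, coeff_mk]
  have hne : ((n:ℂ)+1) ≠ 0 := Nat.cast_add_one_ne_zero (R := ℂ) n
  have hpow : ((-1:ℂ))^(n+1+1) = (-1)^n := by rw [pow_succ, pow_succ]; ring
  simp only [PowerSeries.coeff_smul, map_sub, logOneAdd, logOneSub, coeff_mk,
    Nat.succ_ne_zero, if_neg, smul_eq_mul]
  push_cast
  rw [hpow]
  field_simp
  ring

lemma ode_u (x : ℂ) : ((1:ℂ⟦X⟧) - X^2) * d⁄dX ℂ (x • (logOneAdd - logOneSub)) = C (2*x) := by
  rw [deriv_u]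
  ext n
  rw [sub_mul, one_mul, map_sub, coeff_X_pow_mul', coeff_mk, coeff_C]
  rcases n with _ | _ | m
  · norm_num [mul_comm]
  · norm_num
  · have h1 : ¬ (m + 1 + 1 = 0) := by omega
    rw [if_neg h1, if_pos (by omega), coeff_mk]
    have : m + 1 + 1 - 2 = m := by omega
    rw [this]
    have hpow : ((-1:ℂ))^(m+1+1) = (-1)^m := by rw [pow_succ, pow_succ]; ring
    rw [hpow]
    ring

lemma ode_unique {c : ℂ} {F G : ℂ⟦X⟧}
    (hF : ((1:ℂ⟦X⟧) - X^2) * d⁄dX ℂ F = C c * F)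
    (hG : ((1:ℂ⟦X⟧) - X^2) * d⁄dX ℂ G = C c * G)
    (h0 : coeff 0 F = coeff 0 G) : F = G := by
  ext n
  induction n using Nat.strong_induction_on with
  | _ n ih =>
    match n with
    | 0 => exact h0
    | (m+1) =>
      have key : ∀ H : ℂ⟦X⟧, ((1:ℂ⟦X⟧) - X^2) * d⁄dX ℂ H = C c * H →
          coeff (m+1) H * ((m:ℂ)+1)
          = c * coeff m H
            + (if 2 ≤ m then coeff (m-1) H * (((m-2:ℕ):ℂ)+1) else 0) := by
        intro H hH
        have h := congrArg (coeff m) hH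
        rw [sub_mul, one_mul, map_sub, coeff_X_pow_mul', coeff_derivative,
          coeff_C_mul] at h
        by_cases hm : 2 ≤ m
        · rw [if_pos hm] at h
          rw [coeff_derivative] at h
          have he : m - 2 + 1 = m - 1 := by omega
          rw [he] at h
          rw [if_pos hm]
          linear_combination h
        · rw [if_neg hm] at h
          rw [if_neg hm]
          linear_combination h
      have e1 := key F hF
      have e2 := key G hG
      rw [ih m (by omega)] at e1
      by_cases hm : 2 ≤ m
      · rw [if_pos hm] at e1 e2
        rw [ih (m-1) (by omega)] at e1
        have := e1.trans e2.symm
        exact mul_right_cancel₀ (Nat.cast_add_one_ne_zero (R := ℂ) m) this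
      · rw [if_neg hm] at e1 e2
        have := e1.trans e2.symm
        exact mul_right_cancel₀ (Nat.cast_add_one_ne_zero (R := ℂ) m) this

lemma ode_T (x : ℂ) : ((1:ℂ⟦X⟧) - X^2) * d⁄dX ℂ (PowerSeries.mk (Ssum x))
    = (C (2*x) + 1 + X) * PowerSeries.mk (Ssum x) := by
  ext n
  rw [sub_mul, one_mul, map_sub, coeff_X_pow_mul', add_mul, add_mul, map_add, map_add,
    coeff_C_mul, one_mul, coeff_derivative, coeff_mk, coeff_mk]
  rcases n with _ | m
  · have h0 := Ssum_rec x 0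
    norm_num at h0 ⊢
    linear_combination h0
  · rw [show ((X:ℂ⟦X⟧) * PowerSeries.mk (Ssum x)) = X^1 * PowerSeries.mk (Ssum x) from by ring,
      coeff_X_pow_mul', if_pos (by omega : 1 ≤ m+1)]
    rcases Nat.eq_zero_or_pos m with hm | hm
    · subst hm
      rw [if_neg (by omega)]
      have h1 := Ssum_rec x 1
      norm_num at h1 ⊢
      linear_combination h1
    · rw [if_pos (by omega : 2 ≤ m+1), coeff_derivative, coeff_mk]
      have he1 : m + 1 - 2 + 1 = m := by omega
      have he2 : m + 1 - 1 = m := by omega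
      rw [he1, he2]
      have h1 := Ssum_rec x (m+1)
      have hc : ((m+1-2:ℕ):ℂ) + 1 = (m:ℂ) := by
        rw [Nat.cast_sub (by omega)]
        push_cast
        ring
      rw [hc, coeff_mk]
      simp only [Nat.add_sub_cancel] at h1
      push_cast at h1 ⊢
      linear_combination h1

lemma ode_G (x : ℂ) : ((1:ℂ⟦X⟧) - X^2) * d⁄dX ℂ ((1 - X) * PowerSeries.mk (Ssum x))
    = C (2*x) * ((1 - X) * PowerSeries.mk (Ssum x)) := by
  have hd : d⁄dX ℂ ((1 - X) * PowerSeries.mk (Ssum x))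
      = -(PowerSeries.mk (Ssum x)) + (1 - X) * d⁄dX ℂ (PowerSeries.mk (Ssum x)) := by
    rw [(d⁄dX ℂ).leibniz]
    rw [map_sub, Derivation.map_one_eq_zero, derivative_X]
    simp only [smul_eq_mul]
    ring
  calc ((1:ℂ⟦X⟧) - X^2) * d⁄dX ℂ ((1 - X) * PowerSeries.mk (Ssum x))
      = (1 - X) * (((1:ℂ⟦X⟧) - X^2) * d⁄dX ℂ (PowerSeries.mk (Ssum x)))
        - ((1:ℂ⟦X⟧) - X^2) * PowerSeries.mk (Ssum x) := by rw [hd]; ring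
    _ = (1 - X) * ((C (2*x) + 1 + X) * PowerSeries.mk (Ssum x))
        - ((1:ℂ⟦X⟧) - X^2) * PowerSeries.mk (Ssum x) := by rw [ode_T]
    _ = C (2*x) * ((1 - X) * PowerSeries.mk (Ssum x)) := by ring

end Aux

/-- Pidduck polynomials, defined by `∑ Pₙ(x) zⁿ/n! = (1/(1-z)) ((1+z)/(1-z))^x`,
satisfy `Pₙ(x) = n! ∑_{k=0}^n C(n, n-k) 2^k C(x,k)`. -/
theorem pidduck_expansion (x : ℂ) (P : ℕ → ℂ)
    (hP : (1 - PowerSeries.X) * (PowerSeries.mk fun n => P n / (n.factorial : ℂ)) =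
      psExp (x • (logOneAdd - logOneSub)))
    (n : ℕ) :
    P n = (n.factorial : ℂ) *
      ∑ k ∈ Finset.range (n + 1),
        (n.choose (n - k) : ℂ) * 2 ^ k * genBinom x k := by
  have hF : ((1:ℂ⟦X⟧) - X^2) * d⁄dX ℂ (psExp (x • (logOneAdd - logOneSub)))
      = C (2*x) * psExp (x • (logOneAdd - logOneSub)) := by
    rw [deriv_psExp _ (constc_u x), ← mul_assoc, ode_u]
  have h0 : coeff 0 (psExp (x • (logOneAdd - logOneSub)))
      = coeff 0 ((1 - X) * PowerSeries.mk (Ssum x)) := by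
    rw [coeff_zero_psExp]
    have : coeff 0 ((1 - X) * PowerSeries.mk (Ssum x)) = 1 := by
      rw [coeff_zero_eq_constantCoeff_apply, map_mul, map_sub, map_one, constantCoeff_X,
        ← coeff_zero_eq_constantCoeff_apply, coeff_mk]
      simp [Ssum, genBinom]
    rw [this]
  have hFG : psExp (x • (logOneAdd - logOneSub)) = (1 - X) * PowerSeries.mk (Ssum x) :=
    ode_unique hF (ode_G x) h0
  rw [hFG] at hP
  have h1X : ((1:ℂ⟦X⟧) - X) ≠ 0 := by
    intro h
    have := congrArg (constantCoeff) h
    simp [constantCoeff_X] at this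
  have hQ : (PowerSeries.mk fun m => P m / (m.factorial : ℂ)) = PowerSeries.mk (Ssum x) :=
    mul_left_cancel₀ h1X hP
  have hc := congrArg (coeff n) hQ
  rw [coeff_mk, coeff_mk] at hc
  have hsum : Ssum x n = ∑ k ∈ Finset.range (n + 1),
      (n.choose (n - k) : ℂ) * 2 ^ k * genBinom x k := by
    rw [Ssum]
    refine Finset.sum_congr rfl fun k hk => ?_
    have hk' : k ≤ n := by simp only [Finset.mem_range] at hk; omega
    rw [Nat.choose_symm hk']
  rw [← hsum]
  have hf : (n.factorial : ℂ) ≠ 0 := Nat.cast_ne_zero.2 n.factorial_ne_zero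
  rw [div_eq_iff hf] at hc
  rw [hc]
  ring
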